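/- Let L = L_1 ⊕ L_2 ⊕ … ⊕ L_r be a direct sum of finite-dimensional, non-abelian, directly indecomposable Lie algebras over a field K, and let π_i denote the projection onto L_i. (1) Every Lie algebra automorphism Φ of L decomposes UNIQUELY as Φ = Θ + Ψ where: Θ is a Lie algebra automorphism of L mapping each summand L_i onto an isomorphic summand L_{σ(i)} for some permutation σ of {1,…,r}; Ψ is a Lie algebra endomorphism with Ψ(L) ⊆ Z(L); and π_{σ(i)}(Ψ(L_i)) = 0 for every i. (2) Conversely, for any pair Θ, Ψ of Lie algebra endomorphisms of L satisfying these three conditions, the pointwise sum Θ + Ψ is a Lie algebra automorphism of L. -/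

import Mathlib

/-- A Lie algebra is directly indecomposable if it is nonzero and admits no decomposition
as a direct sum of two nonzero ideals. -/
def LieDirectlyIndecomposable (K M : Type*) [Field K] [LieRing M] [LieAlgebra K M] : Prop :=
  Nontrivial M ∧
    ∀ I J : LieIdeal K M, I ⊓ J = ⊥ → I ⊔ J = ⊤ → I = ⊥ ∨ J = ⊥

section Aux

variable {K M : Type*} [Field K] [LieRing M] [LieAlgebra K M]

/-- In an indecomposable non-abelian Lie algebra, the center lies in the span of brackets. -/
lemma aux_center_le (hind : LieDirectlyIndecomposable K M) (hnonab : ¬ IsLieAbelian M)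
    {z : M} (hz : ∀ y : M, ⁅y, z⁆ = 0) :
    z ∈ Submodule.span K {m : M | ∃ u v : M, ⁅u, v⁆ = m} := by
  set D : Submodule K M := Submodule.span K {m : M | ∃ u v : M, ⁅u, v⁆ = m} with hD
  by_contra hzD
  have hz0 : z ≠ 0 := fun h => hzD (h ▸ D.zero_mem)
  have hzq : D.mkQ z ≠ 0 := by
    simpa [Submodule.Quotient.mk_eq_zero] using hzD
  obtain ⟨W', hW'⟩ := Submodule.exists_isCompl (K ∙ (D.mkQ z))
  set W : Submodule K M := W'.comap D.mkQ with hW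
  have hDW : D ≤ W := by
    intro d hd
    simp only [hW, Submodule.mem_comap]
    have : D.mkQ d = 0 := by simpa [Submodule.Quotient.mk_eq_zero] using hd
    rw [this]; exact W'.zero_mem
  have hbr : ∀ x y : M, ⁅x, y⁆ ∈ D := fun x y => Submodule.subset_span ⟨x, y, rfl⟩
  set I₁ : LieIdeal K M := { (K ∙ z : Submodule K M) with
    lie_mem := by
      intro x m hm
      obtain ⟨c, rfl⟩ := Submodule.mem_span_singleton.mp hm
      show ⁅x, c • z⁆ ∈ (K ∙ z : Submodule K M)
      rw [lie_smul, hz]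
      simp } with hI₁
  set I₂ : LieIdeal K M := { W with
    lie_mem := fun {x m} _ => hDW (hbr x m) } with hI₂
  have hmem1 : ∀ m : M, m ∈ I₁ ↔ m ∈ (K ∙ z : Submodule K M) := fun m => Iff.rfl
  have hmem2 : ∀ m : M, m ∈ I₂ ↔ m ∈ W := fun m => Iff.rfl
  have hinf : I₁ ⊓ I₂ = ⊥ := by
    rw [LieSubmodule.eq_bot_iff]
    intro m hm
    rw [LieSubmodule.mem_inf] at hm
    obtain ⟨c, rfl⟩ := Submodule.mem_span_singleton.mp ((hmem1 m).mp hm.1)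
    have : D.mkQ (c • z) ∈ W' := (hmem2 _).mp hm.2
    have h2 : D.mkQ (c • z) ∈ (K ∙ (D.mkQ z)) ⊓ W' := by
      refine ⟨?_, this⟩
      rw [map_smul]
      exact Submodule.smul_mem _ c (Submodule.mem_span_singleton_self _)
    rw [disjoint_iff.mp hW'.1] at h2
    have : c • D.mkQ z = 0 := by simpa using h2
    rcases smul_eq_zero.mp this with h | h
    · simp [h]
    · exact absurd h hzq
  have hsup : I₁ ⊔ I₂ = ⊤ := by
    rw [eq_top_iff]
    intro x _
    have hx : D.mkQ x ∈ (K ∙ (D.mkQ z)) ⊔ W' := by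
      rw [codisjoint_iff.mp hW'.2]; trivial
    obtain ⟨a, ha, b, hb, hab⟩ := Submodule.mem_sup.mp hx
    obtain ⟨c, rfl⟩ := Submodule.mem_span_singleton.mp ha
    rw [LieSubmodule.mem_sup]
    refine ⟨c • z, ?_, x - c • z, ?_, by abel⟩
    · exact (hmem1 _).mpr (Submodule.smul_mem _ c (Submodule.mem_span_singleton_self _))
    · refine (hmem2 _).mpr ?_
      show D.mkQ (x - c • z) ∈ W'
      rw [map_sub, map_smul, ← hab]
      simpa using hb
  rcases hind.2 I₁ I₂ hinf hsup with h | h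
  · have : z ∈ I₁ := (hmem1 z).mpr (Submodule.mem_span_singleton_self z)
    rw [h] at this
    exact hz0 (by simpa using this)
  · refine hnonab ⟨fun x y => ?_⟩
    have : ⁅x, y⁆ ∈ I₂ := (hmem2 _).mpr (hDW (hbr x y))
    rw [h] at this
    simpa using this


variable {K M : Type*} [Field K] [LieRing M] [LieAlgebra K M]

/-- Powers of a centroid element are centroid elements. -/
lemma aux_centroid_pow (f : M →ₗ[K] M) (hf : ∀ x y : M, f ⁅x, y⁆ = ⁅x, f y⁆) (n : ℕ) :
    ∀ x y : M, (f ^ n) ⁅x, y⁆ = ⁅x, (f ^ n) y⁆ := by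
  induction n with
  | zero => simp
  | succ n ih =>
    intro x y
    rw [pow_succ, Module.End.mul_apply, Module.End.mul_apply, hf, ih]

/-- Fitting dichotomy: a centroid element of a finite-dimensional directly indecomposable
Lie algebra is nilpotent or bijective. -/
lemma aux_dichotomy [FiniteDimensional K M] (hind : LieDirectlyIndecomposable K M)
    (f : M →ₗ[K] M) (hf : ∀ x y : M, f ⁅x, y⁆ = ⁅x, f y⁆) :
    IsNilpotent f ∨ Function.Bijective f := by
  obtain ⟨n, hn1, hn⟩ : ∃ n, 1 ≤ n ∧
      IsCompl (LinearMap.ker (f ^ n)) (LinearMap.range (f ^ n)) := by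
    obtain ⟨n, hn⟩ :=
      ((Filter.eventually_ge_atTop 1).and f.eventually_isCompl_ker_pow_range_pow).exists
    exact ⟨n, hn.1, hn.2⟩
  set K1 : LieIdeal K M := { LinearMap.ker (f ^ n) with
    lie_mem := by
      intro x m hm
      have hm' : (f ^ n) m = 0 := hm
      show (f ^ n) ⁅x, m⁆ = 0
      rw [aux_centroid_pow f hf n, hm', lie_zero] } with hK1
  set R1 : LieIdeal K M := { LinearMap.range (f ^ n) with
    lie_mem := by
      rintro x m ⟨y, rfl⟩
      exact ⟨⁅x, y⁆, (aux_centroid_pow f hf n x y)⟩ } with hR1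
  have hinf : K1 ⊓ R1 = ⊥ := by
    rw [← LieSubmodule.toSubmodule_inj, LieSubmodule.inf_toSubmodule,
      LieSubmodule.bot_toSubmodule]
    exact disjoint_iff.mp hn.1
  have hsup : K1 ⊔ R1 = ⊤ := by
    rw [← LieSubmodule.toSubmodule_inj, LieSubmodule.sup_toSubmodule,
      LieSubmodule.top_toSubmodule]
    exact codisjoint_iff.mp hn.2
  rcases hind.2 K1 R1 hinf hsup with h | h
  · right
    have hker : LinearMap.ker f = ⊥ := by
      rw [eq_bot_iff]
      intro x hx
      have hx' : f x = 0 := hx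
      have : x ∈ K1 := by
        show (f ^ n) x = 0
        obtain ⟨m, rfl⟩ := Nat.exists_eq_add_of_le hn1
        rw [add_comm, pow_succ, Module.End.mul_apply, hx', map_zero]
      rw [h] at this
      simpa using this
    have hinj : Function.Injective f := LinearMap.ker_eq_bot.mp hker
    exact ⟨hinj, LinearMap.injective_iff_surjective.mp hinj⟩
  · left
    refine ⟨n, ?_⟩
    have : LinearMap.range (f ^ n) = ⊥ := by
      rw [eq_bot_iff]
      intro x hx
      have : x ∈ R1 := hx
      rw [h] at this
      simpa using this
    exact LinearMap.range_eq_bot.mp this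

lemma aux_pow_inj (f : M →ₗ[K] M) (hf : Function.Injective f) (n : ℕ) :
    Function.Injective (f ^ n : M →ₗ[K] M) := by
  induction n with
  | zero => intro a b h; simpa using h
  | succ n ih =>
    rw [pow_succ]
    intro a b hab
    simp only [Module.End.mul_apply] at hab
    exact hf (ih hab)

lemma aux_nilp_inj (hM : Nontrivial M) (f : M →ₗ[K] M) (hn : IsNilpotent f)
    (hi : Function.Injective f) : False := by
  obtain ⟨n, hfn⟩ := hn
  obtain ⟨x, hx⟩ := exists_ne (0 : M)
  apply hx
  apply aux_pow_inj f hi n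
  rw [hfn]
  simp

/-- The sum of two nilpotent centroid elements is nilpotent. -/
lemma aux_nilp_add [FiniteDimensional K M] (hind : LieDirectlyIndecomposable K M)
    (f g : M →ₗ[K] M) (hf : ∀ x y : M, f ⁅x, y⁆ = ⁅x, f y⁆)
    (hg : ∀ x y : M, g ⁅x, y⁆ = ⁅x, g y⁆)
    (hfn : IsNilpotent f) (hgn : IsNilpotent g) : IsNilpotent (f + g) := by
  have hfg : ∀ x y : M, (f + g) ⁅x, y⁆ = ⁅x, (f + g) y⁆ := by
    intro x y; simp [hf, hg, lie_add]
  rcases aux_dichotomy hind (f + g) hfg with h | h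
  · exact h
  exfalso
  set e := LinearEquiv.ofBijective (f + g) h with he
  have happ : ∀ x, e x = (f + g) x := fun x => rfl
  have hsymm : ∀ x y : M, e.symm ⁅x, y⁆ = ⁅x, e.symm y⁆ := by
    intro x y
    apply e.injective
    rw [e.apply_symm_apply]
    have : e ⁅x, e.symm y⁆ = (f + g) ⁅x, e.symm y⁆ := rfl
    rw [this, hfg, ← happ, e.apply_symm_apply]
  set p : M →ₗ[K] M := (e.symm : M →ₗ[K] M) ∘ₗ f with hp
  set q : M →ₗ[K] M := (e.symm : M →ₗ[K] M) ∘ₗ g with hq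
  have hpc : ∀ x y : M, p ⁅x, y⁆ = ⁅x, p y⁆ := by
    intro x y; simp only [hp, LinearMap.comp_apply, hf]; exact hsymm x (f y)
  have hqc : ∀ x y : M, q ⁅x, y⁆ = ⁅x, q y⁆ := by
    intro x y; simp only [hq, LinearMap.comp_apply, hg]; exact hsymm x (g y)
  have hpq : ∀ x, p x + q x = x := by
    intro x
    have : p x + q x = e.symm ((f + g) x) := by
      simp [hp, hq, map_add]
    rw [this, ← happ]
    exact e.symm_apply_apply x
  have hN : Nontrivial M := hind.1
  -- p is nilpotent
  have hpn : IsNilpotent p := by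
    rcases aux_dichotomy hind p hpc with h' | h'
    · exact h'
    exfalso
    have hfInj : Function.Injective f := by
      intro a b hab
      apply h'.1
      simp [hp, LinearMap.comp_apply, hab]
    exact aux_nilp_inj hN f hfn hfInj
  have hqn : IsNilpotent q := by
    rcases aux_dichotomy hind q hqc with h' | h'
    · exact h'
    exfalso
    have hgInj : Function.Injective g := by
      intro a b hab
      apply h'.1
      simp [hq, LinearMap.comp_apply, hab]
    exact aux_nilp_inj hN g hgn hgInj
  -- q = id - p, p nilpotent ⟹ q injective; q nilpotent + injective ⟹ False
  obtain ⟨m, hpm⟩ := hpn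
  have hqInj : Function.Injective q := by
    have hker : ∀ x, q x = 0 → x = 0 := by
      intro x hx
      have hfix : p x = x := by
        have := hpq x; rw [hx, add_zero] at this; exact this
      have hiter : ∀ k : ℕ, (p ^ k) x = x := by
        intro k
        induction k with
        | zero => simp
        | succ k ih => rw [pow_succ', Module.End.mul_apply, ih, hfix]
      have := hiter m
      rw [hpm] at this
      simpa using this.symm
    intro a b hab
    have : q (a - b) = 0 := by rw [map_sub, hab, sub_self]
    have := hker _ this
    exact sub_eq_zero.mp this
  exact aux_nilp_inj hN q hqn hqInj

/-- A finite sum of nilpotent centroid elements is nilpotent (with the sum centroid too). -/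
lemma aux_sum_nilp [FiniteDimensional K M] (hind : LieDirectlyIndecomposable K M)
    {ι : Type*} (s : Finset ι) (f : ι → (M →ₗ[K] M))
    (hc : ∀ i ∈ s, ∀ x y : M, f i ⁅x, y⁆ = ⁅x, f i y⁆)
    (hn : ∀ i ∈ s, IsNilpotent (f i)) :
    (∀ x y : M, (∑ i ∈ s, f i) ⁅x, y⁆ = ⁅x, (∑ i ∈ s, f i) y⁆) ∧
      IsNilpotent (∑ i ∈ s, f i) := by
  classical
  induction s using Finset.cons_induction with
  | empty => simp
  | cons a s ha ih =>
    obtain ⟨ihc, ihn⟩ := ih (fun i hi => hc i (Finset.mem_cons.mpr (Or.inr hi)))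
      (fun i hi => hn i (Finset.mem_cons.mpr (Or.inr hi)))
    rw [Finset.sum_cons]
    have hca := hc a (Finset.mem_cons_self a s)
    have hsumc : ∀ x y : M, (f a + ∑ i ∈ s, f i) ⁅x, y⁆ = ⁅x, (f a + ∑ i ∈ s, f i) y⁆ := by
      intro x y; simp [hca, ihc, lie_add]
    exact ⟨hsumc, aux_nilp_add hind _ _ hca ihc (hn a (Finset.mem_cons_self a s)) ihn⟩

end Aux
lemma sum_lie' {K L : Type*} [Field K] [LieRing L] [LieAlgebra K L] {ι : Type*}
    (s : Finset ι) (f : ι → L) (z : L) : ⁅∑ i ∈ s, f i, z⁆ = ∑ i ∈ s, ⁅f i, z⁆ := by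
  classical
  induction s using Finset.cons_induction with
  | empty => simp
  | cons a s ha ih => simp [Finset.sum_insert ha, add_lie, ih]

lemma lie_sum' {K L : Type*} [Field K] [LieRing L] [LieAlgebra K L] {ι : Type*}
    (s : Finset ι) (f : ι → L) (z : L) : ⁅z, ∑ i ∈ s, f i⁆ = ∑ i ∈ s, ⁅z, f i⁆ := by
  classical
  induction s using Finset.cons_induction with
  | empty => simp
  | cons a s ha ih => simp [Finset.sum_insert ha, lie_add, ih]

section DS
variable {K L : Type*} [Field K] [LieRing L] [LieAlgebra K L] {r : ℕ}
variable (g : Fin r → LieIdeal K L) (π : Fin r → (L →ₗ[K] L))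

/-- Brackets between distinct summands vanish. -/
lemma ds_cross (hdisj : ∀ i, g i ⊓ (⨆ k, ⨆ _ : k ≠ i, g k) = ⊥)
    {i k : Fin r} (hik : i ≠ k) {x y : L} (hx : x ∈ g i) (hy : y ∈ g k) :
    ⁅x, y⁆ = 0 := by
  have h1 : ⁅x, y⁆ ∈ g i := by
    have : ⁅y, x⁆ ∈ g i := (g i).lie_mem hx
    rw [← lie_skew]
    exact neg_mem this
  have h2 : ⁅x, y⁆ ∈ g k := (g k).lie_mem hy
  have hle : g k ≤ ⨆ m, ⨆ _ : m ≠ i, g m :=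
    le_iSup_of_le k (le_iSup (fun _ : k ≠ i => g k) (Ne.symm hik))
  have : ⁅x, y⁆ ∈ g i ⊓ (⨆ m, ⨆ _ : m ≠ i, g m) :=
    LieSubmodule.mem_inf _ _ _ |>.mpr ⟨h1, hle h2⟩
  rw [hdisj i] at this
  simpa using this

/-- Induction over the direct sum. -/
lemma ds_induction (hsup : (⨆ i, g i) = ⊤) {C : L → Prop} (x : L)
    (mem : ∀ i, ∀ y ∈ g i, C y) (zero : C 0)
    (add : ∀ y z, C y → C z → C (y + z)) : C x := by
  have hx0 : x ∈ ⨆ i, g i := by rw [hsup]; exact LieSubmodule.mem_top x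
  rw [← LieSubmodule.mem_toSubmodule, LieSubmodule.iSup_toSubmodule] at hx0
  exact Submodule.iSup_induction (motive := C) _ hx0 (fun i y hy => mem i y hy) zero add

/-- Sum of the projections is the identity. -/
lemma ds_sum_proj (hsup : (⨆ i, g i) = ⊤)
    (hπid : ∀ i, ∀ x ∈ g i, π i x = x)
    (hπzero : ∀ i k, k ≠ i → ∀ x ∈ g k, π i x = 0) (x : L) :
    ∑ i, π i x = x := by
  induction x using ds_induction g with
  | hsup => exact hsup
  | mem k y hy =>
    rw [Finset.sum_eq_single k (fun i _ hik => hπzero i k (Ne.symm hik) y hy)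
      (fun h => absurd (Finset.mem_univ k) h)]
    exact hπid k y hy
  | zero => simp
  | add y z hy hz => simp only [map_add]; rw [Finset.sum_add_distrib, hy, hz]

/-- The projections are Lie algebra homomorphisms. -/
lemma ds_proj_bracket (hsup : (⨆ i, g i) = ⊤)
    (hdisj : ∀ i, g i ⊓ (⨆ k, ⨆ _ : k ≠ i, g k) = ⊥)
    (hπmem : ∀ i x, π i x ∈ g i)
    (hπid : ∀ i, ∀ x ∈ g i, π i x = x)
    (hπzero : ∀ i k, k ≠ i → ∀ x ∈ g k, π i x = 0) (i : Fin r) (x y : L) :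
    π i ⁅x, y⁆ = ⁅π i x, π i y⁆ := by
  induction x using ds_induction g with
  | hsup => exact hsup
  | mem k x hx =>
    induction y using ds_induction g with
    | hsup => exact hsup
    | mem l y hy =>
      by_cases hki : k = i
      · subst hki
        by_cases hlk : l = k
        · subst hlk
          have hb : ⁅x, y⁆ ∈ g l := (g l).lie_mem hy
          rw [hπid l _ hb, hπid l x hx, hπid l y hy]
        · rw [ds_cross g hdisj (fun h => hlk h.symm) hx hy, hπzero k l hlk y hy]
          simp
      · have hb : ⁅x, y⁆ ∈ g k := by
          have : ⁅y, x⁆ ∈ g k := (g k).lie_mem hx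
          rw [← lie_skew]; exact neg_mem this
        rw [hπzero i k (fun h => hki h) _ hb, hπzero i k (fun h => hki h) x hx]
        simp
    | zero => simp
    | add y z hy hz => rw [lie_add, map_add, map_add, hy, hz, lie_add]
  | zero => simp
  | add x w hx hw => rw [add_lie, map_add, map_add, hx, hw, add_lie]

/-- Each component of a central element is central. -/
lemma ds_proj_central (hsup : (⨆ i, g i) = ⊤)
    (hdisj : ∀ i, g i ⊓ (⨆ k, ⨆ _ : k ≠ i, g k) = ⊥)
    (hπmem : ∀ i x, π i x ∈ g i)
    (hπid : ∀ i, ∀ x ∈ g i, π i x = x)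
    (hπzero : ∀ i k, k ≠ i → ∀ x ∈ g k, π i x = 0) (i : Fin r) {z : L}
    (hz : ∀ y : L, ⁅y, z⁆ = 0) (y : L) : ⁅y, π i z⁆ = 0 := by
  have hy : y = ∑ m, π m y := (ds_sum_proj g π hsup hπid hπzero y).symm
  rw [hy, sum_lie' (K := K)]
  refine Finset.sum_eq_zero fun m _ => ?_
  by_cases hmi : m = i
  · subst hmi
    have h2 : ⁅π m y, π m z⁆ = π m ⁅π m y, z⁆ := by
      rw [ds_proj_bracket g π hsup hdisj hπmem hπid hπzero m, hπid m _ (hπmem m y)]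
    rw [h2, hz, map_zero]
  · exact ds_cross g hdisj hmi (hπmem m y) (hπmem i z)

/-- The center of `L` is contained in the span of brackets. -/
lemma ds_center_le (hsup : (⨆ i, g i) = ⊤)
    (hdisj : ∀ i, g i ⊓ (⨆ k, ⨆ _ : k ≠ i, g k) = ⊥)
    (hind : ∀ i, LieDirectlyIndecomposable K (g i))
    (hnonab : ∀ i, ¬ IsLieAbelian (g i))
    (hπmem : ∀ i x, π i x ∈ g i)
    (hπid : ∀ i, ∀ x ∈ g i, π i x = x)
    (hπzero : ∀ i k, k ≠ i → ∀ x ∈ g k, π i x = 0) {z : L}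
    (hz : ∀ y : L, ⁅y, z⁆ = 0) :
    z ∈ Submodule.span K {m : L | ∃ u v : L, ⁅u, v⁆ = m} := by
  rw [← ds_sum_proj g π hsup hπid hπzero z]
  refine Submodule.sum_mem _ fun i _ => ?_
  set w : (g i : Type _) := ⟨π i z, hπmem i z⟩ with hw
  have hzw : ∀ y : (g i : Type _), ⁅y, w⁆ = 0 := by
    intro y
    apply Subtype.ext
    show ⁅(y : L), π i z⁆ = 0
    exact ds_proj_central g π hsup hdisj hπmem hπid hπzero i hz y
  have hmem := aux_center_le (hind i) (hnonab i) hzw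
  have hmap := Submodule.mem_map_of_mem (f := Submodule.subtype ((g i : Submodule K L))) hmem
  erw [Submodule.map_span (f := Submodule.subtype ((g i : Submodule K L)))] at hmap
  refine Submodule.span_mono ?_ hmap
  rintro _ ⟨s, ⟨u, v, rfl⟩, rfl⟩
  exact ⟨u, v, rfl⟩
end DS

lemma comp_pow_apply {K M N : Type*} [Field K] [AddCommGroup M] [Module K M]
    [AddCommGroup N] [Module K N] (p : M →ₗ[K] N) (q : N →ₗ[K] M) (n : ℕ) (x : M) :
    ((q ∘ₗ p) ^ (n + 1)) x = q ((((p ∘ₗ q) ^ n)) (p x)) := by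
  induction n generalizing x with
  | zero => simp
  | succ n ih =>
    rw [pow_succ, Module.End.mul_apply, ih, pow_succ, Module.End.mul_apply]
    rfl
section DS2
variable {K L : Type*} [Field K] [LieRing L] [LieAlgebra K L] {r : ℕ}
variable (g : Fin r → LieIdeal K L) (π : Fin r → (L →ₗ[K] L))
variable (hπmem : ∀ i x, π i x ∈ g i)

/-- The composite maps `π i ∘ B ∘ π j ∘ A` restricted to the `i`-th summand. -/
def gm (A B : L →ₗ⁅K⁆ L) (i j : Fin r) :
    (g i : Type _) →ₗ[K] (g i : Type _) :=
  ((π i) ∘ₗ (B : L →ₗ[K] L) ∘ₗ (π j) ∘ₗ (A : L →ₗ[K] L)).restrict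
    (fun x _ => hπmem i _)

lemma gm_coe (A B : L →ₗ⁅K⁆ L) (i j : Fin r) (x : (g i : Type _)) :
    (gm g π hπmem A B i j x : L) = π i (B (π j (A (x : L)))) := rfl

variable (hsup : (⨆ i, g i) = ⊤)
    (hdisj : ∀ i, g i ⊓ (⨆ k, ⨆ _ : k ≠ i, g k) = ⊥)
    (hπid : ∀ i, ∀ x ∈ g i, π i x = x)
    (hπzero : ∀ i k, k ≠ i → ∀ x ∈ g k, π i x = 0)
    (A B : L →ₗ⁅K⁆ L) (hBA : ∀ x, B (A x) = x)

include hsup hπid hπzero hBA in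
lemma gm_sum (i : Fin r) (x : (g i : Type _)) :
    ∑ j, gm g π hπmem A B i j x = x := by
  apply Subtype.ext
  push_cast [AddSubmonoidClass.coe_finset_sum]
  have h1 : ∀ j, (gm g π hπmem A B i j x : L) = ((π i) ∘ₗ (B : L →ₗ[K] L)) (π j (A x)) :=
    fun j => rfl
  calc ∑ j, (gm g π hπmem A B i j x : L)
      = ∑ j, ((π i) ∘ₗ (B : L →ₗ[K] L)) (π j (A (x : L))) := by
        exact Finset.sum_congr rfl fun j _ => h1 j
    _ = ((π i) ∘ₗ (B : L →ₗ[K] L)) (∑ j, π j (A (x : L))) := (map_sum _ _ _).symm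
    _ = ((π i) ∘ₗ (B : L →ₗ[K] L)) (A (x : L)) := by
        rw [ds_sum_proj g π hsup hπid hπzero]
    _ = (x : L) := by show π i (B (A (x : L))) = (x : L); rw [hBA, hπid i _ x.2]

include hsup hdisj hπid hπzero in
lemma gm_orth (i : Fin r) {j k : Fin r} (hjk : j ≠ k) (x y : (g i : Type _)) :
    ⁅(gm g π hπmem A B i j x : L), (gm g π hπmem A B i k y : L)⁆ = 0 := by
  rw [gm_coe, gm_coe, ← ds_proj_bracket g π hsup hdisj hπmem hπid hπzero i,
    ← LieHom.map_lie B, ds_cross g hdisj hjk (hπmem j _) (hπmem k _)]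
  simp

include hsup hdisj hπid hπzero in
lemma gm_mul (i j : Fin r) (x y : (g i : Type _)) :
    gm g π hπmem A B i j ⁅x, y⁆ = ⁅gm g π hπmem A B i j x, gm g π hπmem A B i j y⁆ := by
  apply Subtype.ext
  show π i (B (π j (A ⁅(x : L), (y : L)⁆))) = ⁅(gm g π hπmem A B i j x : L), _⁆
  rw [LieHom.map_lie A, ds_proj_bracket g π hsup hdisj hπmem hπid hπzero j,
    LieHom.map_lie B, ds_proj_bracket g π hsup hdisj hπmem hπid hπzero i]
  rfl

include hsup hdisj hπid hπzero hBA in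
lemma gm_centroid (i j : Fin r) (x y : (g i : Type _)) :
    gm g π hπmem A B i j ⁅x, y⁆ = ⁅x, gm g π hπmem A B i j y⁆ := by
  conv_rhs => rw [← gm_sum g π hπmem hsup hπid hπzero A B hBA i x]
  rw [sum_lie' (K := K) Finset.univ (fun m => gm g π hπmem A B i m x) _]
  rw [Finset.sum_eq_single j (fun m _ hmj => Subtype.ext
      (gm_orth g π hπmem hsup hdisj hπid hπzero A B i hmj x y))
    (fun h => absurd (Finset.mem_univ j) h)]
  exact gm_mul g π hπmem hsup hdisj hπid hπzero A B i j x y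

include hsup hdisj hπid hπzero hBA in
lemma gm_exists_bij [FiniteDimensional K L]
    (hind : ∀ i, LieDirectlyIndecomposable K (g i)) (i : Fin r) :
    ∃ j, Function.Bijective (gm g π hπmem A B i j) := by
  by_contra hno
  push_neg at hno
  have hnil : ∀ j, IsNilpotent (gm g π hπmem A B i j) := by
    intro j
    rcases aux_dichotomy (hind i) (gm g π hπmem A B i j)
        (fun x y => gm_centroid g π hπmem hsup hdisj hπid hπzero A B hBA i j x y) with h | h
    · exact h
    · exact absurd h (hno j)
  obtain ⟨-, hnilsum⟩ := aux_sum_nilp (hind i) Finset.univ (gm g π hπmem A B i ·)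
    (fun j _ x y => gm_centroid g π hπmem hsup hdisj hπid hπzero A B hBA i j x y)
    (fun j _ => hnil j)
  have hid : (∑ j, gm g π hπmem A B i j) = LinearMap.id := by
    apply LinearMap.ext
    intro x
    have := gm_sum g π hπmem hsup hπid hπzero A B hBA i x
    simpa using this
  rw [hid] at hnilsum
  obtain ⟨n, hn⟩ := hnilsum
  have : Nontrivial (g i : Type _) := (hind i).1
  obtain ⟨x, hx⟩ := exists_ne (0 : (g i : Type _))
  apply hx
  have : (LinearMap.id ^ n : (g i : Type _) →ₗ[K] (g i : Type _)) x = x := by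
    clear hn
    induction n with
    | zero => simp
    | succ n ih => rw [pow_succ, Module.End.mul_apply]; simp [ih]
  rw [hn] at this
  simpa using this.symm

include hsup hdisj hπid hπzero in
lemma gm_unique (hnonab : ∀ i, ¬ IsLieAbelian (g i)) (i : Fin r) {j k : Fin r} (hjk : j ≠ k)
    (hbj : Function.Bijective (gm g π hπmem A B i j))
    (hbk : Function.Bijective (gm g π hπmem A B i k)) : False := by
  have hab : ¬ ∀ x y : (g i : Type _), ⁅x, y⁆ = 0 := by
    intro h
    exact hnonab i ⟨fun x y => h x y⟩
  push_neg at hab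
  obtain ⟨x, y, hxy⟩ := hab
  obtain ⟨a, ha⟩ := hbj.2 x
  obtain ⟨b, hb⟩ := hbk.2 y
  apply hxy
  apply Subtype.ext
  rw [← ha, ← hb]
  show ⁅(gm g π hπmem A B i j a : L), (gm g π hπmem A B i k b : L)⁆ = 0
  exact gm_orth g π hπmem hsup hdisj hπid hπzero A B i hjk a b

include hsup hdisj hπid hπzero in
lemma gm_central_of_bij (i : Fin r) {j : Fin r}
    (hbj : Function.Bijective (gm g π hπmem A B i j)) {k : Fin r} (hk : k ≠ j)
    (x : (g i : Type _)) (y : L) : ⁅y, π i (B (π k (A (x : L))))⁆ = 0 := by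
  conv_lhs => rw [← ds_sum_proj g π hsup hπid hπzero y, sum_lie' (K := K)]
  refine Finset.sum_eq_zero fun m _ => ?_
  by_cases hmi : m = i
  · subst hmi
    obtain ⟨w, hw⟩ := hbj.2 ⟨π m y, hπmem m y⟩
    have h1 : π m y = (gm g π hπmem A B m j w : L) := by rw [hw]
    rw [h1]
    exact gm_orth g π hπmem hsup hdisj hπid hπzero A B m hk.symm w x
  · exact ds_cross g hdisj hmi (hπmem m y) (hπmem i _)

include hsup hdisj hπid hπzero hBA in
lemma gm_transfer [FiniteDimensional K L]
    (hind : ∀ i, LieDirectlyIndecomposable K (g i))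
    (hAB : ∀ x, A (B x) = x) (i j : Fin r)
    (hbij : Function.Bijective (gm g π hπmem A B i j)) :
    Function.Bijective (gm g π hπmem B A j i) := by
  rcases aux_dichotomy (hind j) (gm g π hπmem B A j i)
      (fun x y => gm_centroid g π hπmem hsup hdisj hπid hπzero B A hAB j i x y) with h | h
  · exfalso
    obtain ⟨n, hn⟩ := h
    -- (gm A B i j) = bm ∘ₗ am, (gm B A j i) = am ∘ₗ bm
    set am : (g i : Type _) →ₗ[K] (g j : Type _) :=
      ((π j) ∘ₗ (A : L →ₗ[K] L)).restrict (fun x _ => hπmem j _) with ham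
    set bm : (g j : Type _) →ₗ[K] (g i : Type _) :=
      ((π i) ∘ₗ (B : L →ₗ[K] L)).restrict (fun x _ => hπmem i _) with hbm
    have hgm1 : gm g π hπmem A B i j = bm ∘ₗ am := rfl
    have hgm2 : gm g π hπmem B A j i = am ∘ₗ bm := rfl
    have hzero : ((bm ∘ₗ am) ^ (n + 1)) = 0 := by
      apply LinearMap.ext
      intro x
      rw [comp_pow_apply am bm n x, ← hgm2, hn]
      simp
    have : Nontrivial (g i : Type _) := (hind i).1
    exact aux_nilp_inj this (gm g π hπmem A B i j) ⟨n + 1, by rw [hgm1, hzero]⟩ hbij.1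
  · exact h

end DS2

/-- Let `L = L₁ ⊕ ⋯ ⊕ L_r` be a direct sum of finite-dimensional,
non-abelian, directly indecomposable Lie algebras (realized internally as Lie ideals `g i`,
with projections `π i`).  (1) Every Lie algebra automorphism `Φ` of `L` decomposes uniquely
as `Φ = Θ + Ψ` where `Θ` is a Lie algebra automorphism mapping each summand `g i` onto the
isomorphic summand `g (σ i)` for some permutation `σ`, `Ψ` is a central Lie algebra
endomorphism, and `π (σ i) (Ψ (g i)) = 0` for all `i`.  (2) Conversely, for any pair
`(Θ, Ψ)` of Lie algebra endomorphisms satisfying these three conditions, the pointwise sum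
`Θ + Ψ` is a Lie algebra automorphism of `L`. -/
theorem stmt9 {K L : Type*} [Field K] [LieRing L] [LieAlgebra K L]
    [FiniteDimensional K L] {r : ℕ}
    (g : Fin r → LieIdeal K L)
    (hsup : (⨆ i, g i) = ⊤)
    (hdisj : ∀ i, g i ⊓ (⨆ k, ⨆ _ : k ≠ i, g k) = ⊥)
    (hind : ∀ i, LieDirectlyIndecomposable K (g i))
    (hnonab : ∀ i, ¬ IsLieAbelian (g i))
    (π : Fin r → (L →ₗ[K] L))
    (hπmem : ∀ i x, π i x ∈ g i)
    (hπid : ∀ i, ∀ x ∈ g i, π i x = x)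
    (hπzero : ∀ i k, k ≠ i → ∀ x ∈ g k, π i x = 0) :
    (∀ Φ : L →ₗ⁅K⁆ L, Function.Bijective Φ →
      ∃! ΘΨ : (L →ₗ⁅K⁆ L) × (L →ₗ⁅K⁆ L),
        (∀ x : L, Φ x = ΘΨ.1 x + ΘΨ.2 x) ∧
        Function.Bijective ΘΨ.1 ∧
        ∃ σ : Equiv.Perm (Fin r),
          (∀ i, Submodule.map (ΘΨ.1 : L →ₗ[K] L) (g i : Submodule K L)
            = (g (σ i) : Submodule K L)) ∧
          (∀ x : L, ΘΨ.2 x ∈ LieAlgebra.center K L) ∧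
          (∀ i, ∀ x ∈ g i, π (σ i) (ΘΨ.2 x) = 0)) ∧
    (∀ Θ Ψ : L →ₗ⁅K⁆ L,
      Function.Bijective Θ →
      (∃ σ : Equiv.Perm (Fin r),
        (∀ i, Submodule.map (Θ : L →ₗ[K] L) (g i : Submodule K L)
          = (g (σ i) : Submodule K L)) ∧
        (∀ x : L, Ψ x ∈ LieAlgebra.center K L) ∧
        (∀ i, ∀ x ∈ g i, π (σ i) (Ψ x) = 0)) →
      ∃ e : L ≃ₗ⁅K⁆ L, ∀ x : L, e x = Θ x + Ψ x) := by
  classical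
  have hcenter_le : ∀ z : L, (∀ y : L, ⁅y, z⁆ = 0) →
      z ∈ Submodule.span K {m : L | ∃ u v : L, ⁅u, v⁆ = m} := fun z hz =>
    ds_center_le g π hsup hdisj hind hnonab hπmem hπid hπzero hz
  have hcentmem : ∀ z : L, z ∈ LieAlgebra.center K L ↔ ∀ y, ⁅y, z⁆ = 0 := fun z =>
    LieModule.mem_maxTrivSubmodule K L L z
  have hspan_ind : ∀ (C : L → Prop), (∀ u v : L, C ⁅u, v⁆) → C 0 →
      (∀ a b : L, C a → C b → C (a + b)) → (∀ (c : K) (a : L), C a → C (c • a)) →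
      ∀ z ∈ Submodule.span K {m : L | ∃ u v : L, ⁅u, v⁆ = m}, C z := by
    intro C hbr h0 hadd hsmul z hz
    refine Submodule.span_induction (p := fun x _ => C x) ?_ h0
      (fun a b _ _ => hadd a b) (fun c a _ => hsmul c a) hz
    rintro x ⟨u, v, rfl⟩
    exact hbr u v
  constructor
  · -- Part (1)
    intro Φ hΦ
    set E : L ≃ₗ⁅K⁆ L := LieEquiv.ofBijective Φ hΦ with hE
    set Φ' : L →ₗ⁅K⁆ L := (E.symm : L →ₗ⁅K⁆ L) with hΦ'def
    have hBA : ∀ x, Φ' (Φ x) = x := fun x => E.symm_apply_apply x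
    have hAB : ∀ x, Φ (Φ' x) = x := fun x => E.apply_symm_apply x
    have hexists := fun i => gm_exists_bij g π hπmem hsup hdisj hπid hπzero Φ Φ' hBA hind i
    choose σ₀ hσ₀ using hexists
    have hinjσ : Function.Injective σ₀ := by
      intro i i' hii'
      by_contra hii
      have h1 := gm_transfer g π hπmem hsup hdisj hπid hπzero Φ Φ' hBA hind hAB i (σ₀ i) (hσ₀ i)
      have h2 := gm_transfer g π hπmem hsup hdisj hπid hπzero Φ Φ' hBA hind hAB i' (σ₀ i')
        (hσ₀ i')
      rw [← hii'] at h2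
      exact gm_unique g π hπmem hsup hdisj hπid hπzero Φ' Φ hnonab (σ₀ i) hii h1 h2
    set σ : Equiv.Perm (Fin r) := Equiv.ofBijective σ₀ (Finite.injective_iff_bijective.mp hinjσ)
      with hσdef
    have hσap : ∀ i, σ i = σ₀ i := fun i => rfl
    have hδ : ∀ k, Function.Bijective (gm g π hπmem Φ' Φ k (σ.symm k)) := by
      intro k
      have h1 := gm_transfer g π hπmem hsup hdisj hπid hπzero Φ Φ' hBA hind hAB (σ.symm k)
        (σ₀ (σ.symm k)) (hσ₀ (σ.symm k))
      have h2 : σ₀ (σ.symm k) = k := σ.apply_symm_apply k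
      rwa [h2] at h1
    have hcent : ∀ i k, k ≠ σ i → ∀ x ∈ g i, ∀ y : L, ⁅y, π k (Φ x)⁆ = 0 := by
      intro i k hk x hx y
      conv_lhs => rw [← ds_sum_proj g π hsup hπid hπzero y, sum_lie' (K := K)]
      refine Finset.sum_eq_zero fun m _ => ?_
      by_cases hmk : m = k
      · rw [hmk]
        set v : (g k : Type _) := ⟨π k y, hπmem k y⟩ with hv
        have hvsum : π k y = ∑ l, (gm g π hπmem Φ' Φ k l v : L) := by
          conv_lhs => rw [show π k y = (v : L) from rfl,
            ← gm_sum g π hπmem hsup hπid hπzero Φ' Φ hAB k v]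
          rw [AddSubmonoidClass.coe_finset_sum]
        rw [hvsum, sum_lie' (K := K)]
        refine Finset.sum_eq_zero fun l _ => ?_
        by_cases hlτ : l = σ.symm k
        · have hli : l ≠ i := by
            intro h
            apply hk
            rw [← h, hlτ]
            exact (σ.apply_symm_apply k).symm
          have hu : π l (Φ' (v : L)) ∈ g l := hπmem l _
          show ⁅π k (Φ (π l (Φ' (v : L)))), π k (Φ x)⁆ = 0
          rw [← ds_proj_bracket g π hsup hdisj hπmem hπid hπzero k, ← LieHom.map_lie Φ,
            ds_cross g hdisj hli hu hx, map_zero, map_zero]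
        · have h0 := gm_central_of_bij g π hπmem hsup hdisj hπid hπzero Φ' Φ k (hδ k) hlτ v
            (π k (Φ x))
          rw [← lie_skew]
          rw [show (gm g π hπmem Φ' Φ k l v : L) = π k (Φ (π l (Φ' (v : L)))) from rfl] at *
          rw [h0, neg_zero]
      · exact ds_cross g hdisj hmk (hπmem m y) (hπmem k _)
    have hsurj : ∀ i, ∀ y ∈ g (σ i), ∃ x, x ∈ g i ∧ π (σ i) (Φ x) = y := by
      intro i y hy
      obtain ⟨w, hw⟩ := (hδ (σ i)).2 ⟨y, hy⟩
      have h2 : σ.symm (σ i) = i := σ.symm_apply_apply i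
      have hw' : π (σ i) (Φ (π (σ.symm (σ i)) (Φ' (w : L)))) = y := congrArg Subtype.val hw
      rw [h2] at hw'
      exact ⟨π i (Φ' (w : L)), hπmem i _, hw'⟩
    set Θl : L →ₗ[K] L := ∑ i, (π (σ i)) ∘ₗ (Φ : L →ₗ[K] L) ∘ₗ (π i) with hΘl
    have hΘx : ∀ i, ∀ x ∈ g i, Θl x = π (σ i) (Φ x) := by
      intro i x hx
      have h1 : Θl x = ∑ m, π (σ m) (Φ (π m x)) := by
        rw [hΘl, LinearMap.sum_apply]
        exact Finset.sum_congr rfl fun m _ => rfl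
      rw [h1, Finset.sum_eq_single i
        (fun m _ hmi => by rw [hπzero m i (Ne.symm hmi) x hx]; simp)
        (fun h => absurd (Finset.mem_univ i) h), hπid i x hx]
    have hσne : ∀ {i m : Fin r}, i ≠ m → σ i ≠ σ m := fun h hc => h (σ.injective hc)
    have hlieΘ : ∀ x y : L, Θl ⁅x, y⁆ = ⁅Θl x, Θl y⁆ := by
      intro x
      induction x using ds_induction g with
      | hsup => exact hsup
      | mem i x hx =>
        intro y
        induction y using ds_induction g with
        | hsup => exact hsup
        | mem m y hy =>
          by_cases him : i = m
          · rw [← him] at hy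
            have hxy : ⁅x, y⁆ ∈ g i := (g i).lie_mem hy
            rw [hΘx i _ hxy, hΘx i x hx, hΘx i y hy, LieHom.map_lie,
              ds_proj_bracket g π hsup hdisj hπmem hπid hπzero (σ i)]
          · rw [ds_cross g hdisj him hx hy, map_zero, hΘx i x hx, hΘx m y hy,
              ds_cross g hdisj (hσne him) (hπmem _ _) (hπmem _ _)]
        | zero => simp
        | add y z hy hz => rw [lie_add, map_add, map_add, hy, hz, lie_add]
      | zero => intro y; simp
      | add x w hx hw => intro y; rw [add_lie, map_add, map_add, hx y, hw y, add_lie]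
    set ΘLie : L →ₗ⁅K⁆ L := { Θl with map_lie' := fun {x y} => hlieΘ x y } with hΘLie
    set Ψl : L →ₗ[K] L := (Φ : L →ₗ[K] L) - Θl with hΨl
    have hΨap : ∀ x, Ψl x = Φ x - Θl x := fun x => rfl
    have hΨcent1 : ∀ i, ∀ x ∈ g i, ∀ y : L, ⁅y, Ψl x⁆ = 0 := by
      intro i x hx y
      rw [hΨap, lie_sub, hΘx i x hx]
      have hsum : Φ x = ∑ k, π k (Φ x) := (ds_sum_proj g π hsup hπid hπzero (Φ x)).symm
      have h1 : ⁅y, Φ x⁆ = ∑ k, ⁅y, π k (Φ x)⁆ := by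
        conv_lhs => rw [hsum]
        rw [lie_sum' (K := K)]
      have h2 : ∑ k, ⁅y, π k (Φ x)⁆ = ⁅y, π (σ i) (Φ x)⁆ :=
        Finset.sum_eq_single (σ i) (fun k _ hk => hcent i k hk x hx y)
          (fun h => absurd (Finset.mem_univ _) h)
      rw [h1, h2, sub_self]
    have hΨbr : ∀ x y : L, Ψl ⁅x, y⁆ = 0 := by
      intro x
      induction x using ds_induction g with
      | hsup => exact hsup
      | mem i x hx =>
        intro y
        induction y using ds_induction g with
        | hsup => exact hsup
        | mem m y hy =>
          by_cases him : i = m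
          · rw [← him] at hy
            have hxy : ⁅x, y⁆ ∈ g i := (g i).lie_mem hy
            rw [hΨap, hΘx i _ hxy, sub_eq_zero]
            have hsum : Φ ⁅x, y⁆ = ∑ k, π k (Φ ⁅x, y⁆) :=
              (ds_sum_proj g π hsup hπid hπzero _).symm
            conv_lhs => rw [hsum]
            refine (Finset.sum_eq_single (σ i) (fun k _ hk => ?_)
              (fun h => absurd (Finset.mem_univ _) h))
            rw [LieHom.map_lie, ds_proj_bracket g π hsup hdisj hπmem hπid hπzero k,
              ← lie_skew, hcent i k hk x hx (π k (Φ y)), neg_zero]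
          · rw [ds_cross g hdisj him hx hy, map_zero]
        | zero => simp
        | add y z hy hz => rw [lie_add, map_add, hy, hz, add_zero]
      | zero => intro y; simp
      | add x w hx hw => intro y; rw [add_lie, map_add, hx y, hw y, add_zero]
    have hΨcent : ∀ x : L, ∀ y : L, ⁅y, Ψl x⁆ = 0 := by
      intro x y
      conv_lhs => rw [← ds_sum_proj g π hsup hπid hπzero x, map_sum, lie_sum' (K := K)]
      exact Finset.sum_eq_zero fun i _ => hΨcent1 i (π i x) (hπmem i x) y
    have hΨmaplie : ∀ x y : L, Ψl ⁅x, y⁆ = ⁅Ψl x, Ψl y⁆ := by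
      intro x y
      rw [hΨbr x y, ← lie_skew, hΨcent x (Ψl y), neg_zero]
    set ΨLie : L →ₗ⁅K⁆ L := { Ψl with map_lie' := fun {x y} => hΨmaplie x y } with hΨLie
    have hΨD : ∀ z ∈ Submodule.span K {m : L | ∃ u v : L, ⁅u, v⁆ = m}, Ψl z = 0 := by
      refine hspan_ind _ (fun u v => hΨbr u v) (map_zero _) ?_ ?_
      · intro a b ha hb; rw [map_add, ha, hb, add_zero]
      · intro c a ha; rw [map_smul, ha, smul_zero]
    have hED : ∀ z ∈ Submodule.span K {m : L | ∃ u v : L, ⁅u, v⁆ = m},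
        Φ' z ∈ Submodule.span K {m : L | ∃ u v : L, ⁅u, v⁆ = m} := by
      refine hspan_ind _ ?_ ?_ ?_ ?_
      · intro u v; rw [LieHom.map_lie]; exact Submodule.subset_span ⟨_, _, rfl⟩
      · rw [map_zero]; exact Submodule.zero_mem _
      · intro a b ha hb; rw [map_add]; exact Submodule.add_mem _ ha hb
      · intro c a ha; rw [map_smul]; exact Submodule.smul_mem _ _ ha
    have hΘinj : Function.Injective Θl := by
      have hker : ∀ x, Θl x = 0 → x = 0 := by
        intro x hx0
        have hΦx : Φ x = Ψl x := by rw [hΨap, hx0, sub_zero]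
        have hΦxD : Φ x ∈ Submodule.span K {m : L | ∃ u v : L, ⁅u, v⁆ = m} :=
          hcenter_le _ (fun y => by rw [hΦx]; exact hΨcent x y)
        have hxD : x ∈ Submodule.span K {m : L | ∃ u v : L, ⁅u, v⁆ = m} := by
          rw [← hBA x]; exact hED _ hΦxD
        have hΨ0 : Ψl x = 0 := hΨD x hxD
        have hΦ0 : Φ x = 0 := by rw [hΦx, hΨ0]
        rw [← hBA x, hΦ0, map_zero]
      intro a b hab
      exact sub_eq_zero.mp (hker _ (by rw [map_sub, hab, sub_self]))
    have hΘbij : Function.Bijective Θl := ⟨hΘinj, LinearMap.injective_iff_surjective.mp hΘinj⟩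
    have hmap : ∀ i, Submodule.map Θl (g i : Submodule K L) = (g (σ i) : Submodule K L) := by
      intro i
      apply le_antisymm
      · rintro _ ⟨x, hx, rfl⟩
        rw [hΘx i x hx]
        exact hπmem (σ i) (Φ x)
      · intro y hy
        obtain ⟨x, hxg, hxy⟩ := hsurj i y hy
        exact ⟨x, hxg, by rw [hΘx i x hxg, hxy]⟩
    have hπσΨ : ∀ i, ∀ x ∈ g i, π (σ i) (Ψl x) = 0 := by
      intro i x hx
      rw [hΨap, hΘx i x hx, map_sub, hπid (σ i) _ (hπmem (σ i) (Φ x)), sub_self]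
    refine ⟨(ΘLie, ΨLie), ⟨fun x => ?_, hΘbij, σ, fun i => hmap i,
      fun x => (hcentmem _).mpr (hΨcent x), hπσΨ⟩, ?_⟩
    · show Φ x = Θl x + Ψl x
      rw [hΨap]
      abel
    -- uniqueness
    rintro ⟨Θ₁, Ψ₁⟩ ⟨hsum₁, hbij₁, σ₁, hmap₁, hcent₁, hπσ₁⟩
    have hθx₁ : ∀ i, ∀ x ∈ g i, Θ₁ x = π (σ₁ i) (Φ x) := by
      intro i x hx
      have hmem : (Θ₁ x : L) ∈ g (σ₁ i) := by
        have hmm : (Θ₁ : L →ₗ[K] L) x ∈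
            Submodule.map (Θ₁ : L →ₗ[K] L) (g i : Submodule K L) :=
          Submodule.mem_map_of_mem hx
        rw [hmap₁ i] at hmm
        exact hmm
      have h1 : π (σ₁ i) (Φ x) = π (σ₁ i) (Θ₁ x) + π (σ₁ i) (Ψ₁ x) := by
        rw [← map_add, ← hsum₁ x]
      rw [h1, hπid (σ₁ i) _ hmem, hπσ₁ i x hx, add_zero]
    have hσeq : σ₁ = σ := by
      apply Equiv.ext
      intro i
      by_contra hne
      apply hnonab (σ₁ i)
      constructor
      intro a b
      apply Subtype.ext
      show ⁅(a : L), (b : L)⁆ = 0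
      have hb2 : (a : L) ∈ Submodule.map (Θ₁ : L →ₗ[K] L) (g i : Submodule K L) := by
        rw [hmap₁ i]; exact a.2
      obtain ⟨xa, hxa, haeq⟩ := hb2
      have ha2 : (a : L) = π (σ₁ i) (Φ xa) := by rw [← haeq]; exact hθx₁ i xa hxa
      rw [ha2, ← lie_skew, hcent i (σ₁ i) hne xa hxa (b : L), neg_zero]
    have hΘeq : Θ₁ = ΘLie := by
      apply LieHom.ext
      intro x
      induction x using ds_induction g with
      | hsup => exact hsup
      | mem i x hx =>
        rw [hθx₁ i x hx, hσeq]
        exact (hΘx i x hx).symm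
      | zero => simp
      | add a b ha hb => rw [map_add, map_add, ha, hb]
    have hΨeq : Ψ₁ = ΨLie := by
      apply LieHom.ext
      intro x
      have h2 : Ψ₁ x = Φ x - Θ₁ x := by rw [hsum₁ x]; abel
      rw [h2, hΘeq]
      rfl
    rw [Prod.ext_iff]
    exact ⟨hΘeq, hΨeq⟩
  · -- Part (2)
    rintro Θ Ψ hΘ ⟨σ, hmapσ, hcentΨ, hπσ⟩
    have hcent' : ∀ x y : L, ⁅y, Ψ x⁆ = 0 := fun x y => (hcentmem (Ψ x)).mp (hcentΨ x) y
    set S : L →ₗ[K] L := (Θ : L →ₗ[K] L) + (Ψ : L →ₗ[K] L) with hS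
    have hSap : ∀ x, S x = Θ x + Ψ x := fun x => rfl
    have hlie : ∀ x y : L, S ⁅x, y⁆ = ⁅S x, S y⁆ := by
      intro x y
      rw [hSap, hSap, hSap, LieHom.map_lie, LieHom.map_lie]
      have h1 : ⁅Ψ x, Ψ y⁆ = 0 := hcent' y (Ψ x)
      have h2 : ⁅Θ x, Ψ y⁆ = 0 := hcent' y (Θ x)
      have h3 : ⁅Ψ x, Θ y⁆ = 0 := by rw [← lie_skew, hcent' x (Θ y), neg_zero]
      rw [lie_add, add_lie, add_lie, h1, h2, h3]
      abel
    have hΨD2 : ∀ z ∈ Submodule.span K {m : L | ∃ u v : L, ⁅u, v⁆ = m}, Ψ z = 0 := by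
      refine hspan_ind _ (fun u v => by rw [LieHom.map_lie, hcent' v (Ψ u)]) (map_zero _) ?_ ?_
      · intro a b ha hb; rw [map_add, ha, hb, add_zero]
      · intro c a ha; rw [map_smul, ha, smul_zero]
    set eΘ := LinearEquiv.ofBijective (Θ : L →ₗ[K] L) hΘ with heΘ
    have heap : ∀ x, eΘ x = Θ x := fun x => rfl
    have hED2 : ∀ z ∈ Submodule.span K {m : L | ∃ u v : L, ⁅u, v⁆ = m},
        eΘ.symm z ∈ Submodule.span K {m : L | ∃ u v : L, ⁅u, v⁆ = m} := by
      refine hspan_ind _ ?_ ?_ ?_ ?_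
      · intro u v
        have h4 : eΘ.symm ⁅u, v⁆ = ⁅eΘ.symm u, eΘ.symm v⁆ := by
          apply eΘ.injective
          rw [eΘ.apply_symm_apply, heap, LieHom.map_lie,
            show Θ (eΘ.symm u) = eΘ (eΘ.symm u) from rfl,
            show Θ (eΘ.symm v) = eΘ (eΘ.symm v) from rfl,
            eΘ.apply_symm_apply, eΘ.apply_symm_apply]
        rw [h4]
        exact Submodule.subset_span ⟨_, _, rfl⟩
      · rw [map_zero]; exact Submodule.zero_mem _
      · intro a b ha hb; rw [map_add]; exact Submodule.add_mem _ ha hb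
      · intro c a ha; rw [map_smul]; exact Submodule.smul_mem _ _ ha
    have hSinj : Function.Injective S := by
      have hker : ∀ x, S x = 0 → x = 0 := by
        intro x hx0
        have hΘx2 : Θ x = -Ψ x := by
          have h5 : Θ x + Ψ x = 0 := (hSap x).symm.trans hx0
          exact eq_neg_of_add_eq_zero_left h5
        have hΘcent : ∀ y : L, ⁅y, Θ x⁆ = 0 := fun y => by
          rw [hΘx2, lie_neg, hcent' x y, neg_zero]
        have hΘD : Θ x ∈ Submodule.span K {m : L | ∃ u v : L, ⁅u, v⁆ = m} :=
          hcenter_le _ hΘcent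
        have hsymmx : eΘ.symm (Θ x) = x := by rw [← heap x, eΘ.symm_apply_apply]
        have hxD : x ∈ Submodule.span K {m : L | ∃ u v : L, ⁅u, v⁆ = m} := by
          rw [← hsymmx]; exact hED2 _ hΘD
        have hΨ0 : Ψ x = 0 := hΨD2 x hxD
        have hΘ0 : Θ x = 0 := by rw [hΘx2, hΨ0, neg_zero]
        rw [← hsymmx, hΘ0, map_zero]
      intro a b hab
      exact sub_eq_zero.mp (hker _ (by rw [map_sub, hab, sub_self]))
    have hSbij : Function.Bijective S := ⟨hSinj, LinearMap.injective_iff_surjective.mp hSinj⟩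
    set SLie : L →ₗ⁅K⁆ L := { S with map_lie' := fun {x y} => hlie x y } with hSLie
    exact ⟨LieEquiv.ofBijective SLie hSbij, fun x => rfl⟩
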